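/- Let ρ be the 4×4 Hermitian matrix (1/4)[I + ∑_i t_i σ_i ⊗ I + ∑_i R_i σ_i ⊗ σ_i] with real parameters t_1, t_2, t_3, R_1, R_2, R_3. If ρ is positive semidefinite, then 1 − t_1² − t_2² − t_3² ≥ R_3². -/

import Mathlib

set_option maxHeartbeats 2000000


open scoped Matrix ComplexOrder
open Complex

/-- Positivity of the Bloch-form two-qubit density matrix
`ρ = (1/4)[I + ∑ tᵢ σᵢ⊗I + ∑ Rᵢ σᵢ⊗σᵢ]` implies `1 − t₁² − t₂² − t₃² ≥ R₃²`. -/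
theorem bloch_pos_constraint (t1 t2 t3 R1 R2 R3 : ℝ)
    (hρ : (((1 / 4 : ℂ) • !![1 + (R3 : ℂ) + t3, 0, (t1 : ℂ) - t2 * I, (R1 : ℂ) - R2;
        0, 1 - (R3 : ℂ) + t3, (R1 : ℂ) + R2, (t1 : ℂ) - t2 * I;
        (t1 : ℂ) + t2 * I, (R1 : ℂ) + R2, 1 - (R3 : ℂ) - t3, 0;
        (R1 : ℂ) - R2, (t1 : ℂ) + t2 * I, 0, 1 + (R3 : ℂ) - t3]) :
      Matrix (Fin 4) (Fin 4) ℂ).PosSemidef) :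
    1 - t1 ^ 2 - t2 ^ 2 - t3 ^ 2 ≥ R3 ^ 2 := by
  have key := hρ.dotProduct_mulVec_nonneg
  have h1 := key ![((1 : ℂ) - R3 - t3), 0, -((t1 : ℂ) + t2 * I), 0]
  have h2 := key ![((t1 : ℂ) - t2 * I), 0, -((1 : ℂ) + R3 + t3), 0]
  have h3 := key ![0, ((1 : ℂ) + R3 - t3), 0, -((t1 : ℂ) + t2 * I)]
  have h4 := key ![0, ((t1 : ℂ) - t2 * I), 0, -((1 : ℂ) - R3 + t3)]
  simp [dotProduct, Matrix.mulVec, Fin.sum_univ_four, Matrix.smul_apply,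
    Complex.le_def, Complex.ext_iff, Complex.add_re, Complex.mul_re, Complex.mul_im,
    Complex.add_im] at h1 h2 h3 h4
  ring_nf at h1 h2 h3 h4
  nlinarith [h1, h2, h3, h4]
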